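/- arXiv:1702.05260 — 2 statements merged into one kernel-verified Lean document; each statement's English description precedes it below -/
import Mathlib

section
/- There exists a constant C > 0 such that for all t > 0, ∫₀¹ e^{-tτ} √τ (∫_{2√τ}^{3} r/√(r² - 4τ) dr) dτ ≤ C⟨t⟩^{-3/2}, where ⟨t⟩ = (1 + t²)^{1/2}. -/
open MeasureTheory

lemma sqrt_nine' : Real.sqrt 9 = 3 := by
  rw [show (9:ℝ) = 3^2 by norm_num, Real.sqrt_sq (by norm_num : (0:ℝ) ≤ 3)]

lemma inner_bound' {τ : ℝ} (h0 : 0 < τ) (h1 : τ ≤ 1) :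
    (∫ r in Set.Ioc (2 * Real.sqrt τ) 3, r / Real.sqrt (r ^ 2 - 4 * τ)) ≤ 12 := by
  set a : ℝ := 2 * Real.sqrt τ with ha
  have hapos : 0 < a := by positivity
  have ha2 : a ≤ 2 := by
    have : Real.sqrt τ ≤ 1 := Real.sqrt_le_one.mpr h1
    nlinarith
  have hsq : a ^ 2 = 4 * τ := by
    rw [ha]; nlinarith [Real.sq_sqrt h0.le]
  set g : ℝ → ℝ := fun r => 3 * (r - a) ^ (-(1/2) : ℝ) with hg
  have hgii : IntervalIntegrable g volume a 3 := by
    have h1 : IntervalIntegrable (fun x : ℝ => x ^ (-(1/2) : ℝ)) volume 0 (3 - a) :=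
      intervalIntegral.intervalIntegrable_rpow' (by norm_num)
    have h2 := (h1.comp_sub_right a).const_mul 3
    rw [zero_add, sub_add_cancel] at h2
    exact h2
  have hgint : IntegrableOn g (Set.Ioc a 3) :=
    (intervalIntegrable_iff_integrableOn_Ioc_of_le (by linarith)).mp hgii
  have hmono : (∫ r in Set.Ioc a 3, r / Real.sqrt (r ^ 2 - 4 * τ)) ≤ ∫ r in Set.Ioc a 3, g r := by
    apply integral_mono_of_nonneg
    · filter_upwards [ae_restrict_mem measurableSet_Ioc] with r hr
      have : (0:ℝ) < r := lt_trans hapos hr.1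
      positivity
    · exact hgint
    · filter_upwards [ae_restrict_mem measurableSet_Ioc] with r hr
      have hra : 0 < r - a := sub_pos.mpr hr.1
      have hrap : 0 < r + a := by linarith
      have hs1 : (0:ℝ) < Real.sqrt (r - a) := Real.sqrt_pos.mpr hra
      have hs2 : (0:ℝ) < Real.sqrt (r + a) := Real.sqrt_pos.mpr hrap
      have key : Real.sqrt (r ^ 2 - 4 * τ) = Real.sqrt (r - a) * Real.sqrt (r + a) := by
        rw [show r ^ 2 - 4 * τ = (r - a) * (r + a) by nlinarith]
        exact Real.sqrt_mul hra.le _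
      have h3 : r ≤ 3 * Real.sqrt (r + a) := by
        have hu : Real.sqrt (r + a) ≤ 3 := by
          calc Real.sqrt (r + a) ≤ Real.sqrt 9 := Real.sqrt_le_sqrt (by linarith [hr.2])
          _ = 3 := sqrt_nine'
        nlinarith [Real.sq_sqrt hrap.le, Real.sqrt_nonneg (r + a)]
      have hrpow : (r - a) ^ (-(1/2) : ℝ) = (Real.sqrt (r - a))⁻¹ := by
        rw [Real.sqrt_eq_rpow, ← Real.rpow_neg hra.le]
      show r / Real.sqrt (r ^ 2 - 4 * τ) ≤ 3 * (r - a) ^ (-(1/2) : ℝ)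
      rw [key, hrpow, div_le_iff₀ (by positivity)]
      have : 3 * (Real.sqrt (r - a))⁻¹ * (Real.sqrt (r - a) * Real.sqrt (r + a))
          = 3 * Real.sqrt (r + a) := by field_simp
      rw [this]; exact h3
  have hval : (∫ r in Set.Ioc a 3, g r) ≤ 12 := by
    have heq : (∫ r in Set.Ioc a 3, g r) = ∫ r in a..3, g r := by
      rw [intervalIntegral.integral_of_le (by linarith)]
    rw [heq, hg]
    rw [intervalIntegral.integral_const_mul]
    have hsub : (∫ r in a..3, (r - a) ^ (-(1/2) : ℝ))
        = ∫ x in (a - a)..(3 - a), x ^ (-(1/2) : ℝ) :=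
      intervalIntegral.integral_comp_sub_right (fun x => x ^ (-(1/2) : ℝ)) a
    rw [hsub, sub_self]
    rw [integral_rpow (Or.inl (by norm_num))]
    have h0r : (0:ℝ) ^ (-(1/2) + 1 : ℝ) = 0 := Real.zero_rpow (by norm_num)
    rw [h0r]
    have h3a : (3 - a) ^ (-(1/2) + 1 : ℝ) ≤ 2 := by
      rw [show (-(1/2) + 1 : ℝ) = 1/2 by norm_num, ← Real.sqrt_eq_rpow]
      calc Real.sqrt (3 - a) ≤ Real.sqrt 4 := Real.sqrt_le_sqrt (by linarith)
      _ = 2 := by rw [show (4:ℝ) = 2^2 by norm_num, Real.sqrt_sq (by norm_num : (0:ℝ) ≤ 2)]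
    rw [show (-(1/2) + 1 : ℝ) = 1/2 by norm_num] at h3a ⊢
    nlinarith [h3a]
  exact le_trans hmono hval

lemma exp_int_bound' {c : ℝ} (hc : 0 < c) :
    (∫ τ in Set.Ioc (0:ℝ) 1, Real.exp (-c * τ)) ≤ 1 / c := by
  rw [← intervalIntegral.integral_of_le (by norm_num : (0:ℝ) ≤ 1)]
  have hd : ∀ x ∈ Set.uIcc (0:ℝ) 1,
      HasDerivAt (fun y => -(Real.exp (-c * y) / c)) (Real.exp (-c * x)) x := by
    intro x _
    have h := (((hasDerivAt_id x).const_mul (-c)).exp.div_const c).neg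
    refine h.congr_deriv ?_
    simp only [id]; field_simp
  rw [intervalIntegral.integral_eq_sub_of_hasDerivAt hd
    ((Real.continuous_exp.comp (continuous_const.mul continuous_id)).intervalIntegrable 0 1)]
  have h1 : 0 < Real.exp (-c * 1) := Real.exp_pos _
  have h2 : Real.exp (-c * 0) = 1 := by norm_num
  rw [h2]
  have h3 : 0 ≤ Real.exp (-c * 1) / c := by positivity
  linarith

lemma mid_bound' {t : ℝ} (ht : 0 < t) :
    (∫ τ in Set.Ioc (0:ℝ) 1, Real.exp (-t * τ) * Real.sqrt τ) ≤ 2 / Real.sqrt t ^ 3 := by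
  have hst : 0 < Real.sqrt t := Real.sqrt_pos.mpr ht
  have hmono : (∫ τ in Set.Ioc (0:ℝ) 1, Real.exp (-t * τ) * Real.sqrt τ)
      ≤ ∫ τ in Set.Ioc (0:ℝ) 1, Real.exp (-(t/2) * τ) / Real.sqrt t := by
    apply setIntegral_mono_on
    · exact ((Real.continuous_exp.comp (continuous_const.mul continuous_id)).mul
        Real.continuous_sqrt).integrableOn_Ioc
    · exact ((Real.continuous_exp.comp (continuous_const.mul continuous_id)).div_const
        _).integrableOn_Ioc
    · exact measurableSet_Ioc
    · intro τ hτ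
      have hτ0 : 0 < τ := hτ.1
      have h1 : Real.sqrt τ = Real.sqrt (t * τ) / Real.sqrt t := by
        rw [Real.sqrt_mul ht.le]; field_simp
      have h2 : Real.sqrt (t * τ) ≤ Real.exp (t * τ / 2) := by
        rw [Real.exp_half]
        exact Real.sqrt_le_sqrt (by nlinarith [Real.add_one_le_exp (t * τ)])
      calc Real.exp (-t * τ) * Real.sqrt τ
          = Real.exp (-t * τ) * Real.sqrt (t * τ) / Real.sqrt t := by rw [h1]; ring
        _ ≤ Real.exp (-t * τ) * Real.exp (t * τ / 2) / Real.sqrt t := by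
            gcongr
        _ = Real.exp (-(t/2) * τ) / Real.sqrt t := by
            rw [← Real.exp_add]; ring_nf
  have hval : (∫ τ in Set.Ioc (0:ℝ) 1, Real.exp (-(t/2) * τ) / Real.sqrt t)
      ≤ 2 / Real.sqrt t ^ 3 := by
    rw [integral_div]
    have hb := exp_int_bound' (show (0:ℝ) < t/2 by linarith)
    have h4 : (∫ τ in Set.Ioc (0:ℝ) 1, Real.exp (-(t/2) * τ)) / Real.sqrt t
        ≤ (1 / (t/2)) / Real.sqrt t := by gcongr
    refine h4.trans (le_of_eq ?_)
    have hmul : Real.sqrt t * Real.sqrt t = t := Real.mul_self_sqrt ht.le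
    field_simp
    linear_combination hmul
  exact hmono.trans hval

lemma rpow_neg_three_halves' {Y : ℝ} (hY : 0 ≤ Y) :
    Y ^ (-(3/2) : ℝ) = 1 / Real.sqrt Y ^ 3 := by
  have h1 : Real.sqrt Y ^ 3 = Y ^ ((3:ℝ)/2) := by
    rw [Real.sqrt_eq_rpow, ← Real.rpow_natCast (Y ^ (1/2:ℝ)) 3, ← Real.rpow_mul hY]
    norm_num
  rw [show (-(3/2) : ℝ) = -((3:ℝ)/2) by norm_num, Real.rpow_neg hY, ← h1, one_div]

/-- There exists `C > 0` such that for all `t > 0`,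
`∫₀¹ e^{-tτ} √τ (∫_{2√τ}^{3} r/√(r² - 4τ) dr) dτ ≤ C⟨t⟩^{-3/2}`,
where `⟨t⟩ = (1 + t²)^{1/2}`. -/
theorem integral_decay_three_halves :
    ∃ C > (0 : ℝ), ∀ t : ℝ, 0 < t →
      (∫ τ in Set.Ioc (0 : ℝ) 1, Real.exp (-t * τ) * Real.sqrt τ *
          ∫ r in Set.Ioc (2 * Real.sqrt τ) 3, r / Real.sqrt (r ^ 2 - 4 * τ)) ≤
        C * Real.sqrt (1 + t ^ 2) ^ (-(3 / 2) : ℝ) := by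
  refine ⟨300, by norm_num, fun t ht => ?_⟩
  set Y : ℝ := Real.sqrt (1 + t ^ 2) with hY
  have hY1 : 1 ≤ Y := by
    have h := Real.sq_sqrt (show (0:ℝ) ≤ 1 + t ^ 2 by positivity)
    nlinarith [Real.sqrt_nonneg (1 + t ^ 2)]
  have hY0 : 0 < Y := lt_of_lt_of_le one_pos hY1
  have hu : 0 < Real.sqrt Y := Real.sqrt_pos.mpr hY0
  rw [rpow_neg_three_halves' hY0.le]
  -- Step 1: bound the inner integral by 12
  have step1 : (∫ τ in Set.Ioc (0 : ℝ) 1, Real.exp (-t * τ) * Real.sqrt τ *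
        ∫ r in Set.Ioc (2 * Real.sqrt τ) 3, r / Real.sqrt (r ^ 2 - 4 * τ))
      ≤ ∫ τ in Set.Ioc (0 : ℝ) 1, Real.exp (-t * τ) * Real.sqrt τ * 12 := by
    apply integral_mono_of_nonneg
    · filter_upwards [ae_restrict_mem measurableSet_Ioc] with τ hτ
      have hin : 0 ≤ ∫ r in Set.Ioc (2 * Real.sqrt τ) 3, r / Real.sqrt (r ^ 2 - 4 * τ) := by
        apply setIntegral_nonneg measurableSet_Ioc
        intro r hr
        have hr0 : 0 ≤ r := le_trans (by positivity) hr.1.le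
        positivity
      positivity
    · exact (((Real.continuous_exp.comp (continuous_const.mul continuous_id)).mul
        Real.continuous_sqrt).mul continuous_const).integrableOn_Ioc
    · filter_upwards [ae_restrict_mem measurableSet_Ioc] with τ hτ
      exact mul_le_mul_of_nonneg_left (inner_bound' hτ.1 hτ.2) (by positivity)
  rw [integral_mul_const] at step1
  rcases le_total t 1 with htle | htge
  · -- small t : the middle integral is at most 1
    have hm : (∫ τ in Set.Ioc (0:ℝ) 1, Real.exp (-t * τ) * Real.sqrt τ) ≤ 1 := by
      have : (∫ τ in Set.Ioc (0:ℝ) 1, Real.exp (-t * τ) * Real.sqrt τ)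
          ≤ ∫ _ in Set.Ioc (0:ℝ) 1, (1:ℝ) := by
        apply setIntegral_mono_on
        · exact ((Real.continuous_exp.comp (continuous_const.mul continuous_id)).mul
            Real.continuous_sqrt).integrableOn_Ioc
        · exact continuous_const.integrableOn_Ioc
        · exact measurableSet_Ioc
        · intro τ hτ
          have he : Real.exp (-t * τ) ≤ 1 := Real.exp_le_one_iff.mpr (by nlinarith [hτ.1])
          have hs : Real.sqrt τ ≤ 1 := Real.sqrt_le_one.mpr hτ.2
          nlinarith [Real.exp_pos (-t * τ), Real.sqrt_nonneg τ]
      refine this.trans ?_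
      rw [setIntegral_const]
      simp [Real.volume_Ioc]
    have hYle : Real.sqrt Y ≤ 2 := by
      have h2 : Y ≤ 4 := by
        rw [hY, show (4:ℝ) = Real.sqrt (4^2) by rw [Real.sqrt_sq]; norm_num]
        exact Real.sqrt_le_sqrt (by nlinarith)
      calc Real.sqrt Y ≤ Real.sqrt 4 := Real.sqrt_le_sqrt h2
      _ = 2 := by rw [show (4:ℝ) = 2^2 by norm_num, Real.sqrt_sq (by norm_num : (0:ℝ) ≤ 2)]
    have hcube : Real.sqrt Y ^ 3 ≤ 8 := by nlinarith [pow_le_pow_left₀ hu.le hYle 3]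
    have hfin : (12:ℝ) ≤ 300 * (1 / Real.sqrt Y ^ 3) := by
      rw [mul_one_div, le_div_iff₀ (by positivity)]
      nlinarith
    calc (∫ τ in Set.Ioc (0 : ℝ) 1, Real.exp (-t * τ) * Real.sqrt τ *
          ∫ r in Set.Ioc (2 * Real.sqrt τ) 3, r / Real.sqrt (r ^ 2 - 4 * τ))
        ≤ (∫ τ in Set.Ioc (0:ℝ) 1, Real.exp (-t * τ) * Real.sqrt τ) * 12 := step1
      _ ≤ 1 * 12 := by
          apply mul_le_mul_of_nonneg_right hm (by norm_num)
      _ ≤ 300 * (1 / Real.sqrt Y ^ 3) := by rw [one_mul]; exact hfin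
  · -- large t
    set s : ℝ := Real.sqrt t with hs
    have hspos : 0 < s := Real.sqrt_pos.mpr ht
    have hmid := mid_bound' ht
    have hu2s : Real.sqrt Y ≤ 2 * s := by
      have h1 : Y ≤ 4 * t := by
        rw [hY, show 4 * t = Real.sqrt ((4*t)^2) by rw [Real.sqrt_sq (by linarith)]]
        exact Real.sqrt_le_sqrt (by nlinarith)
      calc Real.sqrt Y ≤ Real.sqrt (4 * t) := Real.sqrt_le_sqrt h1
      _ = 2 * s := by
          rw [hs, show (4:ℝ) * t = 2^2 * t by norm_num, Real.sqrt_mul (by positivity),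
            Real.sqrt_sq (by norm_num : (0:ℝ) ≤ 2)]
    have hfin : 2 / s ^ 3 * 12 ≤ 300 * (1 / Real.sqrt Y ^ 3) := by
      rw [mul_one_div, div_mul_eq_mul_div, div_le_div_iff₀ (by positivity) (by positivity)]
      nlinarith [pow_le_pow_left₀ hu.le hu2s 3, pow_pos hu 3, pow_pos hspos 3]
    calc (∫ τ in Set.Ioc (0 : ℝ) 1, Real.exp (-t * τ) * Real.sqrt τ *
          ∫ r in Set.Ioc (2 * Real.sqrt τ) 3, r / Real.sqrt (r ^ 2 - 4 * τ))
        ≤ (∫ τ in Set.Ioc (0:ℝ) 1, Real.exp (-t * τ) * Real.sqrt τ) * 12 := step1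
      _ ≤ (2 / s ^ 3) * 12 := mul_le_mul_of_nonneg_right hmid (by norm_num)
      _ ≤ 300 * (1 / Real.sqrt Y ^ 3) := hfin
end

section
/- Define Γ(t,ξ) = (e^{tλ₂(ξ)} - e^{tλ₁(ξ)})/(λ₂(ξ) - λ₁(ξ)) where λ_{1,2}(ξ) = -|ξ|²/2 ± √(|ξ|⁴/4 - ξ₃²) (complex square root). Then there exists C > 0 such that t|ξ|² |∂ₜΓ(t,ξ)| ≤ C for all t > 0 and all ξ ∈ ℝ³ with λ₁(ξ) ≠ λ₂(ξ). -/
noncomputable section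

/-- The eigenvalue `λ₁(ξ) = -|ξ|²/2 + √(|ξ|⁴/4 - ξ₃²)` (complex square root). -/
def lamP (ξ₁ ξ₂ ξ₃ : ℝ) : ℂ :=
  -(((ξ₁ ^ 2 + ξ₂ ^ 2 + ξ₃ ^ 2) / 2 : ℝ) : ℂ)
    + (((ξ₁ ^ 2 + ξ₂ ^ 2 + ξ₃ ^ 2) ^ 2 / 4 - ξ₃ ^ 2 : ℝ) : ℂ) ^ ((1 : ℂ) / 2)

/-- The eigenvalue `λ₂(ξ) = -|ξ|²/2 - √(|ξ|⁴/4 - ξ₃²)` (complex square root). -/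
def lamM (ξ₁ ξ₂ ξ₃ : ℝ) : ℂ :=
  -(((ξ₁ ^ 2 + ξ₂ ^ 2 + ξ₃ ^ 2) / 2 : ℝ) : ℂ)
    - (((ξ₁ ^ 2 + ξ₂ ^ 2 + ξ₃ ^ 2) ^ 2 / 4 - ξ₃ ^ 2 : ℝ) : ℂ) ^ ((1 : ℂ) / 2)

lemma sdb_aux1 {s : ℝ} (hs : 0 ≤ s) : s * Real.exp (-s) ≤ 1 := by
  have h1 : Real.exp (-s) * Real.exp s = 1 := by rw [← Real.exp_add]; simp
  have h2 := Real.add_one_le_exp s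
  nlinarith [Real.exp_pos (-s), Real.exp_pos s]

lemma sdb_aux2 {s : ℝ} (hs : 0 ≤ s) : s ^ 2 * Real.exp (-s) ≤ 4 := by
  have h1 : Real.exp (-s) * Real.exp s = 1 := by rw [← Real.exp_add]; simp
  have h2 := Real.add_one_le_exp (s / 2)
  have h3 : Real.exp (s / 2) * Real.exp (s / 2) = Real.exp s := by
    rw [← Real.exp_add]; ring_nf
  nlinarith [Real.exp_pos (-s), Real.exp_pos s, Real.exp_pos (s / 2)]

lemma sdb_aux3 {a : ℝ} : Real.sinh a ≤ a * Real.exp a := by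
  rw [Real.sinh_eq]
  have h1 := Real.add_one_le_exp (-(2 * a))
  have h2 : Real.exp (-a) * Real.exp (-a) = Real.exp (-(2*a)) := by
    rw [← Real.exp_add]; ring_nf
  have h3 : Real.exp a * Real.exp (-a) = 1 := by rw [← Real.exp_add]; simp
  nlinarith [Real.exp_pos a, Real.exp_pos (-a)]

lemma sdb_aux4 {a : ℝ} : Real.sinh a ≤ Real.exp a / 2 := by
  rw [Real.sinh_eq]
  nlinarith [Real.exp_pos (-a)]

lemma sdb_key_real {a b : ℝ} (ha : 0 < a) (hab : a ≤ b) :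
    2 * b * Real.exp (-b) * |Real.cosh a - b / a * Real.sinh a| ≤ 12 := by
  have hb : 0 < b := ha.trans_le hab
  have hc0 : 0 ≤ b - a := by linarith
  have hid : Real.cosh a - b / a * Real.sinh a
      = Real.exp (-a) - (b - a) / a * Real.sinh a := by
    rw [Real.cosh_eq, Real.sinh_eq]; field_simp; ring
  have hsinh0 : 0 ≤ Real.sinh a := Real.sinh_nonneg_iff.mpr ha.le
  have habs : |Real.cosh a - b / a * Real.sinh a|
      ≤ Real.exp (-a) + (b - a) / a * Real.sinh a := by
    rw [hid]
    refine (abs_sub _ _).trans ?_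
    rw [abs_of_nonneg (Real.exp_pos _).le, abs_of_nonneg (by positivity)]
  have hebpos := Real.exp_pos (-b)
  have key1 : 2 * b * Real.exp (-b) * Real.exp (-a) ≤ 2 := by
    have := sdb_aux1 hb.le
    have hea : Real.exp (-a) ≤ 1 := Real.exp_le_one_iff.mpr (by linarith)
    nlinarith [Real.exp_pos (-a)]
  have hsplit : Real.exp (-b) = Real.exp (-a) * Real.exp (-(b - a)) := by
    rw [← Real.exp_add]; ring_nf
  have key2 : 2 * b * Real.exp (-b) * ((b - a) / a * Real.sinh a) ≤ 10 := by
    set c := b - a with hcdef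
    have hce1 : c * Real.exp (-c) ≤ 1 := sdb_aux1 hc0
    have hce4 : c ^ 2 * Real.exp (-c) ≤ 4 := sdb_aux2 hc0
    rcases le_total a 1 with h1 | h1
    · have hs := sdb_aux3 (a := a)
      have hba : b ≤ 1 + c := by simp [hcdef]; linarith
      calc 2 * b * Real.exp (-b) * (c / a * Real.sinh a)
          ≤ 2 * b * Real.exp (-b) * (c / a * (a * Real.exp a)) := by
            apply mul_le_mul_of_nonneg_left _ (by positivity)
            apply mul_le_mul_of_nonneg_left hs (by positivity)
        _ = 2 * b * c * (Real.exp (-a) * Real.exp (-c) * Real.exp a) := by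
            rw [hsplit]; field_simp
        _ = 2 * b * c * Real.exp (-c) := by
            rw [show Real.exp (-a) * Real.exp (-c) * Real.exp a
              = Real.exp (-c) * (Real.exp (-a) * Real.exp a) by ring,
              ← Real.exp_add]
            simp
        _ ≤ 2 * (1 + c) * c * Real.exp (-c) := by
            apply mul_le_mul_of_nonneg_right _ (Real.exp_pos _).le
            nlinarith
        _ = 2 * (c * Real.exp (-c)) + 2 * (c ^ 2 * Real.exp (-c)) := by ring
        _ ≤ 10 := by nlinarith
    · have hs := sdb_aux4 (a := a)
      have hba : b / a ≤ 1 + c := by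
        rw [div_le_iff₀ ha]
        have : c ≤ c * a := le_mul_of_one_le_right hc0 h1
        simp [hcdef] at this ⊢
        nlinarith
      calc 2 * b * Real.exp (-b) * (c / a * Real.sinh a)
          ≤ 2 * b * Real.exp (-b) * (c / a * (Real.exp a / 2)) := by
            apply mul_le_mul_of_nonneg_left _ (by positivity)
            apply mul_le_mul_of_nonneg_left hs (by positivity)
        _ = (b / a) * c * (Real.exp (-a) * Real.exp (-c) * Real.exp a) := by
            rw [hsplit]; field_simp
        _ = (b / a) * c * Real.exp (-c) := by
            rw [show Real.exp (-a) * Real.exp (-c) * Real.exp a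
              = Real.exp (-c) * (Real.exp (-a) * Real.exp a) by ring,
              ← Real.exp_add]
            simp
        _ ≤ (1 + c) * c * Real.exp (-c) := by
            apply mul_le_mul_of_nonneg_right _ (Real.exp_pos _).le
            nlinarith
        _ = (c * Real.exp (-c)) + (c ^ 2 * Real.exp (-c)) := by ring
        _ ≤ 10 := by nlinarith
  calc 2 * b * Real.exp (-b) * |Real.cosh a - b / a * Real.sinh a|
      ≤ 2 * b * Real.exp (-b) * (Real.exp (-a) + (b - a) / a * Real.sinh a) := by
        apply mul_le_mul_of_nonneg_left habs (by positivity)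
    _ = 2 * b * Real.exp (-b) * Real.exp (-a)
        + 2 * b * Real.exp (-b) * ((b - a) / a * Real.sinh a) := by ring
    _ ≤ 12 := by linarith

lemma sdb_key_imag {b y : ℝ} (hb : 0 < b) (hy : |y| ≤ b) (x : ℝ) :
    2 * b * Real.exp (-b) * |Real.cos x - y| ≤ 12 := by
  have h1 : |Real.cos x - y| ≤ 1 + b := by
    refine (abs_sub _ _).trans ?_
    have := Real.abs_cos_le_one x
    linarith
  have hce1 : b * Real.exp (-b) ≤ 1 := sdb_aux1 hb.le
  have hce4 : b ^ 2 * Real.exp (-b) ≤ 4 := sdb_aux2 hb.le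
  have := Real.exp_pos (-b)
  calc 2 * b * Real.exp (-b) * |Real.cos x - y|
      ≤ 2 * b * Real.exp (-b) * (1 + b) := by
        apply mul_le_mul_of_nonneg_left h1 (by positivity)
    _ = 2 * (b * Real.exp (-b)) + 2 * (b ^ 2 * Real.exp (-b)) := by ring
    _ ≤ 12 := by linarith

lemma sdb_cpow_half_of_pos {d : ℝ} (hd : 0 < d) :
    ((d : ℂ)) ^ ((1 : ℂ) / 2) = ((Real.sqrt d : ℝ) : ℂ) := by
  rw [Real.sqrt_eq_rpow, Complex.ofReal_cpow hd.le]
  norm_num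

lemma sdb_cpow_half_of_neg {d : ℝ} (hd : d < 0) :
    ((d : ℂ)) ^ ((1 : ℂ) / 2) = ((Real.sqrt (-d) : ℝ) : ℂ) * Complex.I := by
  rw [Complex.ofReal_cpow_of_nonpos hd.le]
  have h1 : -((d : ℝ) : ℂ) = (((-d : ℝ)) : ℂ) := by push_cast; ring
  have h2 : (↑Real.pi * Complex.I * ((1:ℂ)/2)) = ((Real.pi/2 : ℝ) : ℂ) * Complex.I := by
    push_cast; ring
  rw [h1, sdb_cpow_half_of_pos (by linarith), h2, Complex.exp_mul_I,
    ← Complex.ofReal_cos, ← Complex.ofReal_sin, Real.cos_pi_div_two, Real.sin_pi_div_two]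
  simp

lemma sdb_key_identity (t : ℝ) (c μ : ℂ) (hμ : μ ≠ 0) :
    ((-c - μ) * Complex.exp ((t:ℂ) * (-c - μ)) - (-c + μ) * Complex.exp ((t:ℂ) * (-c + μ)))
      / ((-c - μ) - (-c + μ))
    = Complex.exp (-((t:ℂ) * c)) *
        (Complex.cosh ((t:ℂ) * μ) - c / μ * Complex.sinh ((t:ℂ) * μ)) := by
  have h1 : (t:ℂ) * (-c - μ) = -((t:ℂ)*c) + -((t:ℂ)*μ) := by ring
  have h2 : (t:ℂ) * (-c + μ) = -((t:ℂ)*c) + (t:ℂ)*μ := by ring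
  have hcosh : Complex.cosh ((t:ℂ)*μ)
      = (Complex.exp ((t:ℂ)*μ) + Complex.exp (-((t:ℂ)*μ))) / 2 := rfl
  have hsinh : Complex.sinh ((t:ℂ)*μ)
      = (Complex.exp ((t:ℂ)*μ) - Complex.exp (-((t:ℂ)*μ))) / 2 := rfl
  have hden : (-c - μ) - (-c + μ) = -(2*μ) := by ring
  rw [h1, h2, Complex.exp_add, Complex.exp_add, hcosh, hsinh, hden, div_eq_iff
    (neg_ne_zero.mpr (mul_ne_zero two_ne_zero hμ))]
  have hE : Complex.exp (-((t:ℂ)*μ)) * Complex.exp ((t:ℂ)*μ) = 1 := by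
    rw [← Complex.exp_add]; simp
  field_simp
  ring

/-- With `Γ(t,ξ) = (e^{tλ₂} - e^{tλ₁})/(λ₂ - λ₁)`, so that
`∂ₜΓ(t,ξ) = (λ₂e^{tλ₂} - λ₁e^{tλ₁})/(λ₂ - λ₁)`, there exists `C > 0` such that
`t|ξ|² |∂ₜΓ(t,ξ)| ≤ C` for all `t > 0` and all `ξ ∈ ℝ³` with `λ₁(ξ) ≠ λ₂(ξ)`. -/
theorem symbol_time_derivative_bound :
    ∃ C > (0 : ℝ), ∀ t : ℝ, 0 < t → ∀ ξ₁ ξ₂ ξ₃ : ℝ,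
      lamP ξ₁ ξ₂ ξ₃ ≠ lamM ξ₁ ξ₂ ξ₃ →
      t * (ξ₁ ^ 2 + ξ₂ ^ 2 + ξ₃ ^ 2) *
          ‖(lamM ξ₁ ξ₂ ξ₃ * Complex.exp ((t : ℂ) * lamM ξ₁ ξ₂ ξ₃)
              - lamP ξ₁ ξ₂ ξ₃ * Complex.exp ((t : ℂ) * lamP ξ₁ ξ₂ ξ₃))
            / (lamM ξ₁ ξ₂ ξ₃ - lamP ξ₁ ξ₂ ξ₃)‖ ≤ C := by
  refine ⟨12, by norm_num, ?_⟩
  intro t ht ξ₁ ξ₂ ξ₃ hne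
  set r : ℝ := ξ₁ ^ 2 + ξ₂ ^ 2 + ξ₃ ^ 2 with hrdef
  set d : ℝ := r ^ 2 / 4 - ξ₃ ^ 2 with hddef
  set c : ℂ := ((r / 2 : ℝ) : ℂ) with hcdef
  set μ : ℂ := ((d : ℝ) : ℂ) ^ ((1 : ℂ) / 2) with hμdef
  have hP : lamP ξ₁ ξ₂ ξ₃ = -c + μ := rfl
  have hM : lamM ξ₁ ξ₂ ξ₃ = -c - μ := rfl
  have hμ0 : μ ≠ 0 := by
    intro h
    exact hne (by rw [hP, hM, h]; ring)
  have hd0 : d ≠ 0 := by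
    intro h
    apply hμ0
    rw [hμdef, h]
    push_cast
    exact Complex.zero_cpow (by norm_num)
  have hr0 : 0 ≤ r := by positivity
  rw [hP, hM, sdb_key_identity t c μ hμ0]
  set b : ℝ := t * (r / 2) with hbdef
  have e1 : -((t:ℂ) * c) = ((-b : ℝ) : ℂ) := by
    rw [hcdef, hbdef, Complex.ofReal_neg, Complex.ofReal_mul]
  rcases hd0.lt_or_gt with hdneg | hdpos
  · -- d < 0 : purely imaginary square root
    set ν : ℝ := Real.sqrt (-d) with hνdef
    have hν : 0 < ν := Real.sqrt_pos.mpr (by linarith)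
    have hrpos : 0 < r := by
      rw [hrdef]
      rw [hddef] at hdneg
      nlinarith [sq_nonneg ξ₁, sq_nonneg ξ₂, sq_nonneg ξ₃, sq_nonneg r, hrdef]
    have hb : 0 < b := by positivity
    have hμr : μ = ((ν : ℝ) : ℂ) * Complex.I := by
      rw [hμdef, sdb_cpow_half_of_neg hdneg]
    have e2 : (t:ℂ) * μ = (((t * ν : ℝ)) : ℂ) * Complex.I := by
      rw [hμr]; push_cast; ring
    have e3 : Complex.cosh ((t:ℂ) * μ) = ((Real.cos (t * ν) : ℝ) : ℂ) := by
      rw [e2, Complex.cosh_mul_I, Complex.ofReal_cos]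
    have hνc : ((ν : ℝ) : ℂ) ≠ 0 := Complex.ofReal_ne_zero.mpr hν.ne'
    have e4 : c / μ * Complex.sinh ((t:ℂ) * μ)
        = (((r / 2) * Real.sin (t * ν) / ν : ℝ) : ℂ) := by
      rw [e2, Complex.sinh_mul_I, hμr, hcdef]
      calc ((r / 2 : ℝ) : ℂ) / (((ν : ℝ) : ℂ) * Complex.I) * (Complex.sin ((t * ν : ℝ) : ℂ) * Complex.I)
          = ((r / 2 : ℝ) : ℂ) * Complex.sin ((t * ν : ℝ) : ℂ) * Complex.I / (((ν : ℝ) : ℂ) * Complex.I) := by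
            ring
        _ = ((r / 2 : ℝ) : ℂ) * Complex.sin ((t * ν : ℝ) : ℂ) / ((ν : ℝ) : ℂ) := by
            rw [mul_div_mul_right _ _ Complex.I_ne_zero]
        _ = (((r / 2) * Real.sin (t * ν) / ν : ℝ) : ℂ) := by
            rw [← Complex.ofReal_sin, ← Complex.ofReal_mul, ← Complex.ofReal_div]
    have habs : ‖Complex.exp (-((t:ℂ) * c)) *
          (Complex.cosh ((t:ℂ) * μ) - c / μ * Complex.sinh ((t:ℂ) * μ))‖
        = Real.exp (-b) * |Real.cos (t * ν) - (r / 2) * Real.sin (t * ν) / ν| := by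
      rw [e1, e3, e4, ← Complex.ofReal_exp, ← Complex.ofReal_sub, ← Complex.ofReal_mul,
        Complex.norm_real, Real.norm_eq_abs, abs_mul, abs_of_pos (Real.exp_pos _)]
    rw [habs]
    have hy : |(r / 2) * Real.sin (t * ν) / ν| ≤ b := by
      rw [abs_div, abs_mul, abs_of_nonneg (by positivity : (0:ℝ) ≤ r / 2),
        abs_of_pos hν, div_le_iff₀ hν, hbdef]
      have h5 : |Real.sin (t * ν)| ≤ t * ν := by
        have h6 : |Real.sin (t * ν)| ≤ |t * ν| := Real.abs_sin_le_abs
        have h7 : |t * ν| = t * ν := abs_of_nonneg (by positivity)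
        rw [h7] at h6
        exact h6
      nlinarith [abs_nonneg (Real.sin (t * ν))]
    calc t * r * (Real.exp (-b) * |Real.cos (t * ν) - (r / 2) * Real.sin (t * ν) / ν|)
        = 2 * b * Real.exp (-b) * |Real.cos (t * ν) - (r / 2) * Real.sin (t * ν) / ν| := by
          rw [hbdef]; ring
      _ ≤ 12 := sdb_key_imag hb hy _
  · -- d > 0 : real square root
    set a : ℝ := t * Real.sqrt d with hadef
    have hsq : 0 < Real.sqrt d := Real.sqrt_pos.mpr hdpos
    have ha : 0 < a := by positivity
    have hsqle : Real.sqrt d ≤ r / 2 := by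
      have h6 : d ≤ (r / 2) ^ 2 := by rw [hddef]; nlinarith [sq_nonneg ξ₃]
      calc Real.sqrt d ≤ Real.sqrt ((r / 2) ^ 2) := Real.sqrt_le_sqrt h6
        _ = r / 2 := Real.sqrt_sq (by positivity)
    have hab : a ≤ b := by
      rw [hadef, hbdef]
      exact mul_le_mul_of_nonneg_left hsqle ht.le
    have hμr : μ = ((Real.sqrt d : ℝ) : ℂ) := by
      rw [hμdef, sdb_cpow_half_of_pos hdpos]
    have e2 : (t:ℂ) * μ = ((a : ℝ) : ℂ) := by rw [hμr, hadef]; push_cast; ring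
    have e3 : c / μ = ((b / a : ℝ) : ℂ) := by
      have hba : b / a = (r / 2) / Real.sqrt d := by
        rw [hadef, hbdef, mul_div_mul_left _ _ ht.ne']
      rw [hμr, hcdef, hba]
      push_cast
      ring
    have habs : ‖Complex.exp (-((t:ℂ) * c)) *
          (Complex.cosh ((t:ℂ) * μ) - c / μ * Complex.sinh ((t:ℂ) * μ))‖
        = Real.exp (-b) * |Real.cosh a - b / a * Real.sinh a| := by
      rw [e1, e2, e3, ← Complex.ofReal_exp, ← Complex.ofReal_cosh, ← Complex.ofReal_sinh,
        ← Complex.ofReal_mul, ← Complex.ofReal_sub, ← Complex.ofReal_mul,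
        Complex.norm_real, Real.norm_eq_abs, abs_mul, abs_of_pos (Real.exp_pos _)]
    rw [habs]
    calc t * r * (Real.exp (-b) * |Real.cosh a - b / a * Real.sinh a|)
        = 2 * b * Real.exp (-b) * |Real.cosh a - b / a * Real.sinh a| := by
          rw [hbdef]; ring
      _ ≤ 12 := sdb_key_real ha hab
end
end
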